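/- Let X ⊆ A* with a^n ∈ X, B = A \ {a}, and suppose for some word w ∈ B(a*B)* the set W = X_w ∪ {y} ∪ {a^n} with y ∈ a*wa* is a code, where X_w is nonempty and Card(X_w) = n. Then, decomposing W over the prefix code Z = {a, w}, there is a code Y over a two-letter alphabet {c,d} with c^n ∈ Y, Y ⊆ c*dc* ∪ {c^n}, and Card(Y ∩ c*dc*) = n + 1, contradicting the bound Card ≤ n; hence X_w ∪ {a^n} is a maximal code in a*wa* ∪ a*. -/

import Mathlib

/-- The submonoid `X*` generated by a set of words `X`. -/
def starOf {A : Type*} (X : Set (List A)) : Set (List A) :=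
  {u | ∃ l : List (List A), (∀ w ∈ l, w ∈ X) ∧ l.flatten = u}

/-- `X` is a code: unique factorization of words of `X*` into elements of `X`. -/
def IsCode {A : Type*} (X : Set (List A)) : Prop :=
  ∀ l m : List (List A), (∀ w ∈ l, w ∈ X) → (∀ w ∈ m, w ∈ X) →
    l.flatten = m.flatten → l = m

/-- `X_w = a*wa* ∩ [X* \ (a^n X* ∪ X* a^n)]`. -/
def Xw {A : Type*} (X : Set (List A)) (a : A) (n : ℕ) (w : List A) : Set (List A) :=
  {x | (∃ r v : ℕ, x = List.replicate r a ++ w ++ List.replicate v a) ∧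
    x ∈ starOf X ∧
    (¬∃ y ∈ starOf X, x = List.replicate n a ++ y) ∧
    (¬∃ y ∈ starOf X, x = y ++ List.replicate n a)}

namespace XwAux

variable {A : Type*}

/-- `a^p w a^q`. -/
def ywd (a : A) (w : List A) (p q : ℕ) : List A :=
  List.replicate p a ++ w ++ List.replicate q a

/-- factorization list: paddings by `a^n` interleaved with words `a^p w a^q`. -/
def factL (a : A) (w : List A) (n : ℕ) : List (ℕ × ℕ × ℕ) → ℕ → List (List A)
  | [], e' => List.replicate e' (List.replicate n a)
  | (e, p, q) :: t, e' =>
      List.replicate e (List.replicate n a) ++ (ywd a w p q :: factL a w n t e')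

/-- merged word associated to a factorization, with leading carry `c`. -/
def Fw (a : A) (w : List A) (n : ℕ) : ℕ → List (ℕ × ℕ × ℕ) → ℕ → List A
  | c, [], e' => List.replicate (c + n * e') a
  | c, (e, p, q) :: t, e' => List.replicate (c + n * e + p) a ++ w ++ Fw a w n q t e'

/-- trace of a sequence of (p,q) pairs with carry. -/
def traceL : ℕ → List (ℕ × ℕ) → List ℕ
  | c, [] => [c]
  | c, x :: t => (c + x.1) :: traceL x.2 t

lemma traceL_length : ∀ (L : List (ℕ × ℕ)) (c : ℕ), (traceL c L).length = L.length + 1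
  | [], c => rfl
  | x :: t, c => by simp [traceL, traceL_length t x.2]

lemma flat_factL (a : A) (w : List A) (n : ℕ) :
    ∀ (T : List (ℕ × ℕ × ℕ)) (e' c : ℕ),
      List.replicate c a ++ (factL a w n T e').flatten = Fw a w n c T e' := by
  intro T
  induction T with
  | nil =>
    intro e' c
    simp [factL, Fw, Nat.mul_comm]
  | cons x t ih =>
    intro e' c
    obtain ⟨e, p, q⟩ := x
    simp only [factL, Fw, List.flatten_append, List.flatten_cons, ywd]
    rw [List.flatten_replicate_replicate, ← ih e' q]
    simp only [← List.append_assoc, ← List.replicate_add]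
    ring_nf

lemma modeq_exists (n x y : ℕ) (h : x ≡ y [MOD n]) : ∃ e e', x + n * e = y + n * e' := by
  rcases le_total x y with h' | h'
  · obtain ⟨e, he⟩ := (Nat.modEq_iff_dvd' h').mp h
    exact ⟨e, 0, by omega⟩
  · obtain ⟨e, he⟩ := (Nat.modEq_iff_dvd' h').mp h.symm
    exact ⟨0, e, by omega⟩

lemma exF (a : A) (w : List A) (n : ℕ) :
    ∀ (L L' : List (ℕ × ℕ)) (c c' : ℕ),
      (traceL c L).map (Nat.cast : ℕ → ZMod n) = (traceL c' L').map Nat.cast →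
      ∃ T T' e e', T.map (fun x => x.2) = L ∧ T'.map (fun x => x.2) = L' ∧
        Fw a w n c T e = Fw a w n c' T' e' := by
  intro L
  induction L with
  | nil =>
    intro L' c c' h
    cases L' with
    | nil =>
      simp [traceL] at h
      obtain ⟨e, e', he⟩ := modeq_exists n c c' ((ZMod.natCast_eq_natCast_iff _ _ _).mp h)
      exact ⟨[], [], e, e', rfl, rfl, by simp [Fw, he]⟩
    | cons x t =>
      apply absurd (congrArg List.length h)
      simp [traceL_length, traceL]
  | cons x t ih =>
    intro L' c c' h
    cases L' with
    | nil =>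
      apply absurd (congrArg List.length h)
      simp [traceL_length, traceL]
    | cons x' t' =>
      obtain ⟨p, q⟩ := x
      obtain ⟨p', q'⟩ := x'
      simp only [traceL, List.map_cons, List.cons.injEq] at h
      obtain ⟨h1, h2⟩ := h
      obtain ⟨T, T', e, e', hT, hT', hF⟩ := ih t' q q' h2
      obtain ⟨f, f', hf⟩ := modeq_exists n (c + p) (c' + p')
        ((ZMod.natCast_eq_natCast_iff _ _ _).mp h1)
      refine ⟨(f, p, q) :: T, (f', p', q') :: T', e, e', by simp [hT], by simp [hT'], ?_⟩
      simp only [Fw]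
      have : c + n * f + p = c' + n * f' + p' := by omega
      rw [this, hF]



lemma ywd_ne (a : A) (w : List A) (hw : w ≠ []) (hhead : w.head hw ≠ a)
    (p q m : ℕ) : ywd a w p q ≠ List.replicate m a := by
  intro h
  have hm : w.head hw ∈ List.replicate m a := by
    rw [← h]
    simp only [ywd, List.mem_append]
    exact Or.inl (Or.inr (List.head_mem hw))
  exact hhead (List.eq_of_mem_replicate hm)

lemma ywd_inj (a : A) (w : List A) (hw : w ≠ []) (hhead : w.head hw ≠ a) :
    ∀ p p' q q', ywd a w p q = ywd a w p' q' → p = p' ∧ q = q' := by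
  obtain ⟨b, wt, rfl⟩ := List.exists_cons_of_ne_nil hw
  have hb : b ≠ a := by simpa using hhead
  intro p
  induction p with
  | zero =>
    intro p' q q' h
    cases p' with
    | zero =>
      simp only [ywd, List.replicate_zero, List.nil_append] at h
      have := List.append_cancel_left h
      have := congrArg List.length this
      simp at this
      omega
    | succ m =>
      exfalso
      simp only [ywd, List.replicate_zero, List.nil_append, List.replicate_succ,
        List.cons_append, List.cons.injEq] at h
      exact hb h.1
  | succ m ih =>
    intro p' q q' h
    cases p' with
    | zero =>
      exfalso
      simp only [ywd, List.replicate_zero, List.nil_append, List.replicate_succ,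
        List.cons_append, List.cons.injEq] at h
      exact hb h.1.symm
    | succ m' =>
      simp only [ywd, List.replicate_succ, List.cons_append, List.cons.injEq] at h
      obtain ⟨hm, hq⟩ := ih m' q q' (by simpa [ywd] using h.2)
      exact ⟨by omega, hq⟩

/-- separation: `b^e ++ c :: L = b^e' ++ c' :: L'` with `c,c' ≠ b` forces equality. -/
lemma repl_sep (b : A) : ∀ (e e' : ℕ) (c c' : A) (L L' : List A),
    c ≠ b → c' ≠ b →
    List.replicate e b ++ c :: L = List.replicate e' b ++ c' :: L' →
    e = e' ∧ c = c' ∧ L = L' := by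
  intro e
  induction e with
  | zero =>
    intro e' c c' L L' hc hc' h
    cases e' with
    | zero => simpa using h
    | succ m =>
      exfalso
      simp only [List.replicate_zero, List.nil_append, List.replicate_succ,
        List.cons_append, List.cons.injEq] at h
      exact hc h.1
  | succ m ih =>
    intro e' c c' L L' hc hc' h
    cases e' with
    | zero =>
      exfalso
      simp only [List.replicate_zero, List.nil_append, List.replicate_succ,
        List.cons_append, List.cons.injEq] at h
      exact hc' h.1.symm
    | succ m' =>
      simp only [List.replicate_succ, List.cons_append, List.cons.injEq] at h
      obtain ⟨he, hcc, hLL⟩ := ih m' c c' L L' hc hc' h.2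
      exact ⟨by omega, hcc, hLL⟩



lemma factL_inj (a : A) (w : List A) (hw : w ≠ []) (hhead : w.head hw ≠ a) (n : ℕ) :
    ∀ (T T' : List (ℕ × ℕ × ℕ)) (e e' : ℕ),
      factL a w n T e = factL a w n T' e' →
      T.map (fun x => x.2) = T'.map (fun x => x.2) := by
  intro T
  induction T with
  | nil =>
    intro T' e e' h
    cases T' with
    | nil => rfl
    | cons x t =>
      exfalso
      obtain ⟨f, p, q⟩ := x
      have hmem : ywd a w p q ∈ factL a w n [] e := by
        rw [h]
        simp [factL]
      simp only [factL] at hmem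
      exact ywd_ne a w hw hhead p q n (List.eq_of_mem_replicate hmem)
  | cons x t ih =>
    intro T' e e' h
    cases T' with
    | nil =>
      exfalso
      obtain ⟨f, p, q⟩ := x
      have hmem : ywd a w p q ∈ factL a w n [] e' := by
        rw [← h]
        simp [factL]
      simp only [factL] at hmem
      exact ywd_ne a w hw hhead p q n (List.eq_of_mem_replicate hmem)
    | cons x' t' =>
      obtain ⟨f, p, q⟩ := x
      obtain ⟨f', p', q'⟩ := x'
      simp only [factL] at h
      obtain ⟨-, hyw, hrest⟩ := repl_sep (List.replicate n a) f f' _ _ _ _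
        (ywd_ne a w hw hhead p q n) (ywd_ne a w hw hhead p' q' n) h
      obtain ⟨hp, hq⟩ := ywd_inj a w hw hhead p p' q q' hyw
      have := ih t' e e' hrest
      simp only [List.map_cons, this, hp, hq]

lemma mem_factL (a : A) (w : List A) (n : ℕ) (C : Set (List A))
    (han : List.replicate n a ∈ C) :
    ∀ (T : List (ℕ × ℕ × ℕ)) (e' : ℕ),
      (∀ x ∈ T, ywd a w x.2.1 x.2.2 ∈ C) → ∀ u ∈ factL a w n T e', u ∈ C := by
  intro T
  induction T with
  | nil =>
    intro e' _ u hu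
    simp only [factL] at hu
    rw [List.eq_of_mem_replicate hu]
    exact han
  | cons x t ih =>
    intro e' hT u hu
    obtain ⟨f, p, q⟩ := x
    simp only [factL, List.mem_append, List.mem_cons] at hu
    rcases hu with hu | hu | hu
    · rw [List.eq_of_mem_replicate hu]; exact han
    · rw [hu]; exact hT (f, p, q) (by simp)
    · exact ih e' (fun x hx => hT x (by simp [hx])) u hu

lemma pow_two_terms : ∀ (k n : ℕ), n ^ k + k * n ^ (k - 1) ≤ (n + 1) ^ k := by
  intro k
  induction k with
  | zero => simp
  | succ m ih =>
    intro n
    have h1 : (n + 1) ^ (m + 1) = (n + 1) ^ m * (n + 1) := pow_succ _ _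
    have h2 := ih n
    have h3 : m * n ^ (m - 1) * n ≥ m * n ^ m := by
      cases m with
      | zero => simp
      | succ j =>
        have h : n ^ j * n = n ^ (j + 1) := (pow_succ _ _).symm
        simp only [Nat.succ_sub_one]
        have h' : (j+1) * n ^ j * n = (j+1) * n ^ (j+1) := by rw [mul_assoc, h]
        omega
    calc n ^ (m + 1) + (m + 1) * n ^ (m + 1 - 1)
        = n ^ m * n + m * n ^ m + n ^ m := by simp [pow_succ]; ring
      _ ≤ n ^ m * n + m * n ^ (m-1) * n + n ^ m := by
          have := h3.le; omega
      _ = (n ^ m + m * n ^ (m-1)) * n + n ^ m := by ring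
      _ ≤ (n + 1) ^ m * n + (n+1) ^ m := by
          have hle : n ^ m ≤ (n+1)^m := Nat.pow_le_pow_left (by omega) m
          have := Nat.mul_le_mul_right n h2
          omega
      _ = (n + 1) ^ (m + 1) := by rw [h1]; ring

lemma card_lt (n : ℕ) (hn : 0 < n) : n ^ (n * n + 1) < (n + 1) ^ (n * n) := by
  have h := pow_two_terms (n * n) n
  have h1 : n * n * n ^ (n * n - 1) = n ^ (n * n + 1) := by
    have h2 : n * n ^ (n * n - 1) = n ^ (n * n) := by
      rw [← pow_succ']
      congr 1
      have : 1 ≤ n * n := Nat.one_le_iff_ne_zero.mpr (by positivity)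
      omega
    calc n * n * n ^ (n * n - 1) = n * (n * n ^ (n * n - 1)) := by ring
      _ = n * n ^ (n * n) := by rw [h2]
      _ = n ^ (n * n + 1) := by rw [← pow_succ']
  have hpos : 0 < n ^ (n * n) := Nat.pow_pos hn
  omega

lemma bound (a : A) (w : List A) (hw : w ≠ []) (hhead : w.head hw ≠ a)
    (n : ℕ) (hn : 0 < n) (C : Set (List A)) (hcode : IsCode C)
    (han : List.replicate n a ∈ C) (f : Fin (n + 1) → List A)
    (hinj : Function.Injective f) (hfC : ∀ i, f i ∈ C)
    (hform : ∀ i, ∃ p q, f i = ywd a w p q) : False := by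
  classical
  set k := n * n with hk
  choose pp qq hpq using hform
  haveI : NeZero n := ⟨by omega⟩
  let L : (Fin k → Fin (n + 1)) → List (ℕ × ℕ) :=
    fun g => List.ofFn (fun j => (pp (g j), qq (g j)))
  have hLlen : ∀ g, (L g).length = k := fun g => by simp [L]
  let tr : (Fin k → Fin (n + 1)) → List.Vector (ZMod n) (k + 1) :=
    fun g => ⟨(traceL 0 (L g)).map (Nat.cast : ℕ → ZMod n), by
      simp [traceL_length, hLlen g]⟩
  have hcard : Fintype.card (List.Vector (ZMod n) (k + 1)) <
      Fintype.card (Fin k → Fin (n + 1)) := by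
    rw [card_vector, ZMod.card]
    rw [Fintype.card_fun]
    simp only [Fintype.card_fin]
    exact card_lt n hn
  obtain ⟨s, t, hst, htr⟩ := Fintype.exists_ne_map_eq_of_card_lt tr hcard
  have htr' : (traceL 0 (L s)).map (Nat.cast : ℕ → ZMod n)
      = (traceL 0 (L t)).map Nat.cast := congrArg Subtype.val htr
  obtain ⟨T, T', e, e', hT, hT', hF⟩ := exF a w n (L s) (L t) 0 0 htr'
  have hmem : ∀ (T₀ : List (ℕ × ℕ × ℕ)) (g : Fin k → Fin (n + 1)),
      T₀.map (fun x => x.2) = L g → ∀ (e₀ : ℕ), ∀ u ∈ factL a w n T₀ e₀, u ∈ C := by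
    intro T₀ g hTg e₀
    refine mem_factL a w n C han T₀ e₀ (fun x hx => ?_)
    have hx2 : x.2 ∈ L g := by
      rw [← hTg]; exact List.mem_map_of_mem hx
    simp only [L, List.mem_ofFn] at hx2
    obtain ⟨j, hj⟩ := hx2
    have hxy : ywd a w x.2.1 x.2.2 = f (g j) := by
      rw [hpq (g j), ← hj]
    rw [hxy]; exact hfC _
  have hfl : (factL a w n T e).flatten = (factL a w n T' e').flatten := by
    have h1 := flat_factL a w n T e 0
    have h2 := flat_factL a w n T' e' 0
    simp only [List.replicate_zero, List.nil_append] at h1 h2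
    rw [h1, h2, hF]
  have heq := hcode _ _ (hmem T s hT e) (hmem T' t hT' e') hfl
  have hLL : L s = L t := by
    rw [← hT, ← hT']; exact factL_inj a w hw hhead n T T' e e' heq
  apply hst
  funext j
  simp only [L] at hLL
  have hfun := List.ofFn_inj.mp hLL
  have hj := congrFun hfun j
  have h1 : pp (s j) = pp (t j) := congrArg Prod.fst hj
  have h2 : qq (s j) = qq (t j) := congrArg Prod.snd hj
  exact hinj (by rw [hpq (s j), hpq (t j), h1, h2])

end XwAux

/-- Let `X ⊆ A*` with `a^n ∈ X` and `w ∈ B(a*B)*` (first and last letter of `w`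
differ from `a`), `X_w` nonempty with `Card(X_w) = n`, and suppose `X_w ∪ {a^n}` is
a code.  Adjoining any further word `y ∈ a*wa*` would produce, via decomposition
over the prefix code `{a, w}`, a code over two letters `{c, d}` with `n + 1` words
in `c*dc*` together with `c^n`, contradicting the bound `Card ≤ n`.  Hence
`X_w ∪ {a^n}` is a maximal code in `a*wa* ∪ a*`. -/



theorem Xw_union_an_maximal {A : Type*} (a : A) (n : ℕ) (X : Set (List A))
    (han : List.replicate n a ∈ X)
    (w : List A) (hw : w ≠ []) (hhead : w.head hw ≠ a) (hlast : w.getLast hw ≠ a)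
    (hne : (Xw X a n w).Nonempty)
    (hfin : (Xw X a n w).Finite) (hcard : (Xw X a n w).ncard = n)
    (hcode : IsCode (Xw X a n w ∪ {List.replicate n a})) :
    ∀ C : Set (List A), IsCode C →
      C ⊆ ({x | ∃ r v : ℕ, x = List.replicate r a ++ w ++ List.replicate v a} ∪
            {x | ∃ m : ℕ, x = List.replicate m a}) →
      (Xw X a n w ∪ {List.replicate n a}) ⊆ C →
      C = Xw X a n w ∪ {List.replicate n a} := by
  classical
  intro C hC hCsub hWC
  have hn : 0 < n := by
    rw [← hcard]; exact (Set.ncard_pos hfin).mpr hne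
  have han' : List.replicate n a ∈ C := hWC (Set.mem_union_right _ rfl)
  refine Set.Subset.antisymm ?_ hWC
  intro y hy
  rcases hCsub hy with hyw | hym
  · by_contra hyW
    have hyXw : y ∉ Xw X a n w := fun h => hyW (Set.mem_union_left _ h)
    have hSfin : (insert y (Xw X a n w)).Finite := hfin.insert y
    have hScard : (insert y (Xw X a n w)).ncard = n + 1 := by
      rw [Set.ncard_insert_of_notMem hyXw hfin, hcard]
    have hSC : insert y (Xw X a n w) ⊆ C := by
      intro z hz
      rcases hz with rfl | hz
      · exact hy
      · exact hWC (Set.mem_union_left _ hz)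
    have hc : hSfin.toFinset.card = n + 1 := by
      rw [← Set.ncard_eq_toFinset_card _ hSfin, hScard]
    let eqv := Finset.equivFinOfCardEq hc
    let f : Fin (n + 1) → List A := fun i => ((eqv.symm i : hSfin.toFinset) : List A)
    have hinj : Function.Injective f := fun i j hij => by
      have := eqv.symm.injective (Subtype.ext hij)
      exact this
    have hfS : ∀ i, f i ∈ insert y (Xw X a n w) := fun i =>
      (Set.Finite.mem_toFinset hSfin).mp (eqv.symm i).2
    have hform : ∀ i, ∃ p q, f i = XwAux.ywd a w p q := by
      intro i
      rcases hfS i with h | h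
      · obtain ⟨r, v, hrv⟩ := hyw
        exact ⟨r, v, by rw [h, hrv]; rfl⟩
      · obtain ⟨⟨r, v, hrv⟩, -, -, -⟩ := h
        exact ⟨r, v, by rw [hrv]; rfl⟩
    exact (XwAux.bound a w hw hhead n hn C hC han' f hinj
      (fun i => hSC (hfS i)) hform).elim
  · obtain ⟨m, rfl⟩ := hym
    have h1 : ∀ u ∈ List.replicate m (List.replicate n a), u ∈ C := fun u hu => by
      rw [List.eq_of_mem_replicate hu]; exact han'
    have h2 : ∀ u ∈ List.replicate n (List.replicate m a), u ∈ C := fun u hu => by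
      rw [List.eq_of_mem_replicate hu]; exact hy
    have h3 : (List.replicate m (List.replicate n a)).flatten
        = (List.replicate n (List.replicate m a)).flatten := by
      simp [Nat.mul_comm]
    have h4 := hC _ _ h1 h2 h3
    have h5 := congrArg List.length h4
    simp only [List.length_replicate] at h5
    rw [h5]
    exact Set.mem_union_right _ rfl
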